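/- Let G be a minimally non-(3,4)-colorable graph with girth at least 5, and let C = u_1 u_2 u_3 u_4 u_5 u_6 be a 6-cycle in G such that exactly one of the vertices u_1, ..., u_6 has degree 2 and none of them is a 5p-vertex. Then at most four of the vertices u_1, ..., u_6 are 5s-vertices or 6p-vertices. -/

import Mathlib

/-- The degree of a vertex: the number of its neighbors. -/
noncomputable def degN {V : Type*} (G : SimpleGraph V) (v : V) : ℕ :=
  {w | G.Adj v w}.ncard

/-- `c` is a (3,4)-coloring of `G`: every vertex gets value 3 or 4, and every
vertex with value `i` has at most `i` neighbors with value `i`. -/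
def IsColoring34 {V : Type*} (G : SimpleGraph V) (c : V → ℕ) : Prop :=
  (∀ v, c v = 3 ∨ c v = 4) ∧ ∀ v, {w | G.Adj v w ∧ c w = c v}.ncard ≤ c v

/-- `G` is (3,4)-colorable. -/
def Colorable34 {V : Type*} (G : SimpleGraph V) : Prop :=
  ∃ c, IsColoring34 G c

/-- The graph `G − v` obtained by deleting the vertex `v` and its incident edges
(keeping `v` as an isolated vertex, which does not affect (3,4)-colorability). -/
def deleteVert {V : Type*} (G : SimpleGraph V) (v : V) : SimpleGraph V where
  Adj a b := G.Adj a b ∧ a ≠ v ∧ b ≠ v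
  symm := ⟨fun _ _ ⟨h, ha, hb⟩ => ⟨h.symm, hb, ha⟩⟩
  loopless := ⟨fun a ⟨h, _, _⟩ => G.loopless.irrefl a h⟩

/-- `G` is minimally non-(3,4)-colorable. -/
def MinNonColorable34 {V : Type*} (G : SimpleGraph V) : Prop :=
  ¬ Colorable34 G ∧ (∀ v, Colorable34 (deleteVert G v)) ∧
    ∀ e ∈ G.edgeSet, Colorable34 (G.deleteEdges {e})

/-- `u` is `i`-saturated under the coloring `c` of the graph `G`. -/
def Saturated34 {V : Type*} (G : SimpleGraph V) (c : V → ℕ) (i : ℕ) (u : V) : Prop :=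
  c u = i ∧ {w | G.Adj u w ∧ c w = i}.ncard = i

/-- `u` can be recolored: changing the color of `u` to the other color
(`7 - c u` swaps 3 and 4) again yields a (3,4)-coloring of `G`. -/
def Recolorable34 {V : Type*} [DecidableEq V] (G : SimpleGraph V) (c : V → ℕ) (u : V) : Prop :=
  IsColoring34 G (Function.update c u (7 - c u))

/-- The number of 3^+-neighbors of `x` in `G` (neighbors of degree at least 3). -/
noncomputable def tpn {V : Type*} (G : SimpleGraph V) (x : V) : ℕ :=
  {w | G.Adj x w ∧ 3 ≤ degN G w}.ncard

/-- A 5p-vertex (poor 5-vertex): degree 5 with exactly one 3^+-neighbor. -/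
def Is5p {V : Type*} (G : SimpleGraph V) (x : V) : Prop := degN G x = 5 ∧ tpn G x = 1

/-- A 5s-vertex (semi-poor 5-vertex): degree 5 with exactly two 3^+-neighbors. -/
def Is5s {V : Type*} (G : SimpleGraph V) (x : V) : Prop := degN G x = 5 ∧ tpn G x = 2

/-- A 6p-vertex (poor 6-vertex): degree 6 with exactly one 3^+-neighbor. -/
def Is6p {V : Type*} (G : SimpleGraph V) (x : V) : Prop := degN G x = 6 ∧ tpn G x = 1

/-- `G` has girth at least 5: no 3-cycles and no 4-cycles. -/
def GirthAtLeast5 {V : Type*} (G : SimpleGraph V) : Prop :=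
  (∀ a b c : V, G.Adj a b → G.Adj b c → ¬ G.Adj c a) ∧
  (∀ a b c d : V, a ≠ c → b ≠ d →
    G.Adj a b → G.Adj b c → G.Adj c d → ¬ G.Adj d a)

section aux
variable {V : Type*} [Fintype V] {G : SimpleGraph V}

lemma sub_ncard {s t : Set V} (h : s ⊆ t) : s.ncard ≤ t.ncard :=
  Set.ncard_le_ncard h (Set.toFinite t)

lemma deleteVert_adj {u a b : V} :
    (deleteVert G u).Adj a b ↔ G.Adj a b ∧ a ≠ u ∧ b ≠ u := Iff.rfl

lemma deg2_nbrs {v a b : V} (hdeg : degN G v = 2) (ha : G.Adj v a) (hb : G.Adj v b)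
    (hab : a ≠ b) {w : V} (hw : G.Adj v w) : w = a ∨ w = b := by
  have hsub : ({a, b} : Set V) ⊆ {w | G.Adj v w} := by
    rintro x (rfl | rfl)
    · exact ha
    · exact hb
  have heq : ({a, b} : Set V) = {w | G.Adj v w} := by
    apply Set.eq_of_subset_of_ncard_le hsub
    rw [Set.ncard_pair hab]
    exact le_of_eq hdeg
  have : w ∈ ({a, b} : Set V) := heq ▸ hw
  simpa using this

lemma tpn2_nbrs {x a b : V} (h : tpn G x = 2) (ha : G.Adj x a) (hb : G.Adj x b) (hab : a ≠ b)
    (hda : 3 ≤ degN G a) (hdb : 3 ≤ degN G b) {w : V} (hw : G.Adj x w) (hwa : w ≠ a)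
    (hwb : w ≠ b) : degN G w ≤ 2 := by
  by_contra hdw
  push_neg at hdw
  have hsub : ({a, b} : Set V) ⊆ {w | G.Adj x w ∧ 3 ≤ degN G w} := by
    rintro y (rfl | rfl)
    · exact ⟨ha, hda⟩
    · exact ⟨hb, hdb⟩
  have heq : ({a, b} : Set V) = {w | G.Adj x w ∧ 3 ≤ degN G w} := by
    apply Set.eq_of_subset_of_ncard_le hsub
    rw [Set.ncard_pair hab]
    exact le_of_eq h
  have : w ∈ ({a, b} : Set V) := heq ▸ (⟨hw, hdw⟩ : w ∈ {w | G.Adj x w ∧ 3 ≤ degN G w})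
  simp only [Set.mem_insert_iff, Set.mem_singleton_iff] at this
  tauto

lemma tpn1_nbrs {x a : V} (h : tpn G x = 1) (ha : G.Adj x a) (hda : 3 ≤ degN G a)
    {w : V} (hw : G.Adj x w) (hwa : w ≠ a) : degN G w ≤ 2 := by
  by_contra hdw
  push_neg at hdw
  have hsub : ({a} : Set V) ⊆ {w | G.Adj x w ∧ 3 ≤ degN G w} := by
    rintro y rfl
    exact ⟨ha, hda⟩
  have heq : ({a} : Set V) = {w | G.Adj x w ∧ 3 ≤ degN G w} := by
    apply Set.eq_of_subset_of_ncard_le hsub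
    rw [Set.ncard_singleton]
    exact le_of_eq h
  have : w ∈ ({a} : Set V) := heq ▸ (⟨hw, hdw⟩ : w ∈ {w | G.Adj x w ∧ 3 ≤ degN G w})
  simp only [Set.mem_singleton_iff] at this
  exact hwa this

lemma part_count (p : V → Prop) (c : V → ℕ) (hval : ∀ w, c w = 3 ∨ c w = 4) :
    {w | p w ∧ c w = 3}.ncard + {w | p w ∧ c w = 4}.ncard = {w | p w}.ncard := by
  rw [← Set.ncard_union_eq ?_ (Set.toFinite _) (Set.toFinite _)]
  · congr 1
    ext w
    simp only [Set.mem_union, Set.mem_setOf_eq]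
    constructor
    · rintro (⟨h, _⟩ | ⟨h, _⟩) <;> exact h
    · intro h
      rcases hval w with h3 | h4
      · exact Or.inl ⟨h, h3⟩
      · exact Or.inr ⟨h, h4⟩
  · rw [Set.disjoint_left]
    rintro w ⟨_, h3⟩ ⟨_, h4⟩
    omega

lemma small_bound {v : V} (h : degN G v ≤ 2) (p : V → Prop) :
    {w | G.Adj v w ∧ p w}.ncard ≤ 2 :=
  le_trans (sub_ncard fun w hw => hw.1) h

lemma del_set {u x : V} (hx : x ≠ u) (p : V → Prop) :
    {w | (deleteVert G u).Adj x w ∧ p w} = {w | (G.Adj x w ∧ w ≠ u) ∧ p w} := by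
  ext w
  simp only [Set.mem_setOf_eq, deleteVert_adj]
  tauto

lemma noU_set {u x : V} (hxu : ¬ G.Adj x u) (p : V → Prop) :
    {w | (G.Adj x w ∧ w ≠ u) ∧ p w} = {w | G.Adj x w ∧ p w} := by
  ext w
  simp only [Set.mem_setOf_eq]
  constructor
  · rintro ⟨⟨h1, _⟩, h2⟩; exact ⟨h1, h2⟩
  · rintro ⟨h1, h2⟩
    refine ⟨⟨h1, ?_⟩, h2⟩
    rintro rfl
    exact hxu h1

/-- coloring bound for a vertex not adjacent to the deleted vertex -/
lemma col_bound_far {u x : V} {c : V → ℕ} (hc : IsColoring34 (deleteVert G u) c)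
    (hx : x ≠ u) (hxu : ¬ G.Adj x u) :
    {w | G.Adj x w ∧ c w = c x}.ncard ≤ c x := by
  have := hc.2 x
  rwa [del_set hx, noU_set hxu] at this

lemma col_bound_near {u x : V} {c : V → ℕ} (hc : IsColoring34 (deleteVert G u) c)
    (hx : x ≠ u) :
    {w | (G.Adj x w ∧ w ≠ u) ∧ c w = c x}.ncard ≤ c x := by
  have := hc.2 x
  rwa [del_set hx] at this

end aux

section blocked
variable {V : Type*} [Fintype V] {G : SimpleGraph V}

lemma blocked {u1 u2 u6 : V} (hnc : ¬ Colorable34 G)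
    {c : V → ℕ} (hc : IsColoring34 (deleteVert G u1) c)
    (hdeg : degN G u1 = 2) (a12 : G.Adj u1 u2) (a16 : G.Adj u1 u6) (h26 : u2 ≠ u6)
    (i : ℕ) (hi : i = 3 ∨ i = 4) :
    ∃ x, (x = u2 ∨ x = u6) ∧ c x = i ∧
      {w | (G.Adj x w ∧ w ≠ u1) ∧ c w = i}.ncard = i := by
  classical
  by_contra hno
  push_neg at hno
  apply hnc
  refine ⟨fun x => if x = u1 then i else c x, fun v => ?_, fun v => ?_⟩
  · dsimp only
    split
    · exact hi
    · exact hc.1 v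
  · dsimp only
    by_cases hv : v = u1
    · subst hv
      rw [if_pos rfl]
      have hsub : {w | G.Adj v w ∧ (if w = v then i else c w) = i} ⊆ {u2, u6} := by
        rintro w ⟨hw, _⟩
        have := deg2_nbrs hdeg a12 a16 h26 hw
        simpa using this
      calc {w | G.Adj v w ∧ (if w = v then i else c w) = i}.ncard
          ≤ ({u2, u6} : Set V).ncard := sub_ncard hsub
        _ = 2 := Set.ncard_pair h26
        _ ≤ i := by omega
    · rw [if_neg hv]
      have hv1 : v ≠ u1 := hv
      by_cases hmem : v = u2 ∨ v = u6
      · by_cases hcv : c v = i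
        · -- not saturated
          have hnsat := hno v hmem hcv
          have hb := col_bound_near hc hv1
          rw [hcv] at hb
          have hle : {w | (G.Adj v w ∧ w ≠ u1) ∧ c w = i}.ncard ≤ i - 1 := by omega
          have hsub : {w | G.Adj v w ∧ (if w = u1 then i else c w) = c v}
              ⊆ insert u1 {w | (G.Adj v w ∧ w ≠ u1) ∧ c w = i} := by
            rintro w ⟨hw, hcw⟩
            by_cases hwu : w = u1
            · exact Or.inl hwu
            · rw [if_neg hwu] at hcw
              exact Or.inr ⟨⟨hw, hwu⟩, hcw.trans hcv⟩
          calc {w | G.Adj v w ∧ (if w = u1 then i else c w) = c v}.ncard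
              ≤ (insert u1 {w | (G.Adj v w ∧ w ≠ u1) ∧ c w = i}).ncard := sub_ncard hsub
            _ ≤ {w | (G.Adj v w ∧ w ≠ u1) ∧ c w = i}.ncard + 1 := Set.ncard_insert_le _ _
            _ ≤ i := by omega
            _ = c v := hcv.symm
        · have hsub : {w | G.Adj v w ∧ (if w = u1 then i else c w) = c v}
              ⊆ {w | (G.Adj v w ∧ w ≠ u1) ∧ c w = c v} := by
            rintro w ⟨hw, hcw⟩
            by_cases hwu : w = u1
            · rw [if_pos hwu] at hcw
              exact absurd hcw.symm hcv
            · rw [if_neg hwu] at hcw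
              exact ⟨⟨hw, hwu⟩, hcw⟩
          exact le_trans (sub_ncard hsub) (col_bound_near hc hv1)
      · push_neg at hmem
        have hvu : ¬ G.Adj v u1 := by
          intro hadj
          rcases deg2_nbrs hdeg a12 a16 h26 hadj.symm with h | h
          · exact hmem.1 h
          · exact hmem.2 h
        have hsub : {w | G.Adj v w ∧ (if w = u1 then i else c w) = c v}
            ⊆ {w | G.Adj v w ∧ c w = c v} := by
          rintro w ⟨hw, hcw⟩
          have hwu : w ≠ u1 := by
            rintro rfl
            exact hvu hw
          rw [if_neg hwu] at hcw
          exact ⟨hw, hcw⟩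
        exact le_trans (sub_ncard hsub) (col_bound_far hc hv1 hvu)

end blocked

section core
variable {V : Type*} [Fintype V] {G : SimpleGraph V}

lemma core {u1 u2 u3 u4 u5 u6 : V} (hnc : ¬ Colorable34 G)
    (hgirth : GirthAtLeast5 G)
    (a12 : G.Adj u1 u2) (a23 : G.Adj u2 u3) (a34 : G.Adj u3 u4)
    (a45 : G.Adj u4 u5) (a56 : G.Adj u5 u6) (a61 : G.Adj u6 u1)
    (n13 : u1 ≠ u3) (n14 : u1 ≠ u4) (n15 : u1 ≠ u5) (n24 : u2 ≠ u4)
    (n25 : u2 ≠ u5) (n26 : u2 ≠ u6) (n35 : u3 ≠ u5) (n36 : u3 ≠ u6) (n46 : u4 ≠ u6)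
    (hdeg1 : degN G u1 = 2) (h3deg : 3 ≤ degN G u3)
    (h6 : Is5s G u6 ∨ Is6p G u6) (h5 : Is5s G u5) (h4 : Is5s G u4)
    {c : V → ℕ} (hc : IsColoring34 (deleteVert G u1) c)
    (hc2 : c u2 = 3) (hc6 : c u6 = 4)
    (hsat6 : {w | (G.Adj u6 w ∧ w ≠ u1) ∧ c w = 4}.ncard = 4) : False := by
  classical
  have n12 : u1 ≠ u2 := a12.ne
  have n23 : u2 ≠ u3 := a23.ne
  have n34 : u3 ≠ u4 := a34.ne
  have n45 : u4 ≠ u5 := a45.ne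
  have n56 : u5 ≠ u6 := a56.ne
  have n16 : u1 ≠ u6 := (a61.ne).symm
  have na13 : ¬ G.Adj u1 u3 := fun h => hgirth.1 u1 u2 u3 a12 a23 h.symm
  have na35 : ¬ G.Adj u3 u5 := fun h => hgirth.1 u3 u4 u5 a34 a45 h.symm
  have na15 : ¬ G.Adj u1 u5 := hgirth.1 u5 u6 u1 a56 a61
  have na24 : ¬ G.Adj u2 u4 := fun h => hgirth.1 u2 u3 u4 a23 a34 h.symm
  have na26 : ¬ G.Adj u2 u6 := hgirth.1 u6 u1 u2 a61 a12
  have na46 : ¬ G.Adj u4 u6 := fun h => hgirth.1 u4 u5 u6 a45 a56 h.symm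
  have na14 : ¬ G.Adj u1 u4 := fun h => hgirth.2 u1 u2 u3 u4 n13 n24 a12 a23 a34 h.symm
  have na25 : ¬ G.Adj u2 u5 := fun h => hgirth.2 u2 u3 u4 u5 n24 n35 a23 a34 a45 h.symm
  have na36 : ¬ G.Adj u3 u6 := fun h => hgirth.2 u3 u4 u5 u6 n35 n46 a34 a45 a56 h.symm
  have hna51 : ¬ G.Adj u5 u1 := fun h => na15 h.symm
  have hna31 : ¬ G.Adj u3 u1 := fun h => na13 h.symm
  have hna41 : ¬ G.Adj u4 u1 := fun h => na14 h.symm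
  have hd4 : degN G u4 = 5 := h4.1
  have hd5 : degN G u5 = 5 := h5.1
  have hd6 : degN G u6 = 5 ∨ degN G u6 = 6 := h6.elim (fun h => Or.inl h.1) (fun h => Or.inr h.1)
  have h3d4 : 3 ≤ degN G u4 := by omega
  have h3d5 : 3 ≤ degN G u5 := by omega
  have h3d6 : 3 ≤ degN G u6 := by omega
  have h5str : ∀ w, G.Adj u5 w → w ≠ u4 → w ≠ u6 → degN G w ≤ 2 :=
    fun w hw hw4 hw6 => tpn2_nbrs h5.2 a45.symm a56 n46 h3d4 h3d6 hw hw4 hw6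
  have h4str : ∀ w, G.Adj u4 w → w ≠ u3 → w ≠ u5 → degN G w ≤ 2 :=
    fun w hw hw3 hw5 => tpn2_nbrs h4.2 a34.symm a45 n35 h3deg h3d5 hw hw3 hw5
  have h6str : Is6p G u6 → ∀ w, G.Adj u6 w → w ≠ u5 → degN G w ≤ 2 :=
    fun h6p w hw hw5 => tpn1_nbrs h6p.2 a56.symm h3d5 hw hw5
  have hu1nbr : ∀ w, G.Adj u1 w → w = u2 ∨ w = u6 :=
    fun w hw => deg2_nbrs hdeg1 a12 a61.symm n26 hw
  have hadj1 : ∀ v, G.Adj v u1 → v = u2 ∨ v = u6 := fun v h => hu1nbr v h.symm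
  -- counting around u6
  have hN6card : {w | G.Adj u6 w ∧ w ≠ u1}.ncard = degN G u6 - 1 := by
    have hmem : u1 ∈ {w | G.Adj u6 w} := a61
    have h2 := Set.ncard_diff_singleton_of_mem hmem
    have heq : {w | G.Adj u6 w ∧ w ≠ u1} = {w | G.Adj u6 w} \ {u1} := by
      ext w
      simp only [Set.mem_setOf_eq, Set.mem_diff, Set.mem_singleton_iff]
    rw [heq, h2]
    rfl
  have hd6le : degN G u6 ≤ 6 := by rcases hd6 with h | h <;> omega
  have hp6 : {w | (G.Adj u6 w ∧ w ≠ u1) ∧ c w = 3}.ncard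
      + {w | (G.Adj u6 w ∧ w ≠ u1) ∧ c w = 4}.ncard
      = {w | G.Adj u6 w ∧ w ≠ u1}.ncard :=
    part_count (fun w => G.Adj u6 w ∧ w ≠ u1) c hc.1
  rw [hsat6, hN6card] at hp6
  have hT3 : {w | (G.Adj u6 w ∧ w ≠ u1) ∧ c w = 3}.ncard ≤ 1 := by omega
  have h5s6all : Is5s G u6 → ∀ w, G.Adj u6 w → w ≠ u1 → c w = 4 := by
    intro h6s w hw hw1
    have hd : degN G u6 = 5 := h6s.1
    have h0 : {w | (G.Adj u6 w ∧ w ≠ u1) ∧ c w = 3}.ncard = 0 := by omega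
    rw [Set.ncard_eq_zero (Set.toFinite _)] at h0
    rcases hc.1 w with h3 | h4
    · exfalso
      have : w ∈ {w | (G.Adj u6 w ∧ w ≠ u1) ∧ c w = 3} := ⟨⟨hw, hw1⟩, h3⟩
      rw [h0] at this
      exact this
    · exact h4
  by_cases hP : c u5 = 3 ∧ {w | G.Adj u5 w ∧ c w = 3}.ncard = 3
  · -- hP : u5 is 3-saturated with color 3
    obtain ⟨hc5, hsat5⟩ := hP
    have h6p : Is6p G u6 := by
      rcases h6 with h6s | h6p
      · exfalso
        have := h5s6all h6s u5 a56.symm n15.symm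
        omega
      · exact h6p
    have h6str' := h6str h6p
    have hp5 : {w | G.Adj u5 w ∧ c w = 3}.ncard + {w | G.Adj u5 w ∧ c w = 4}.ncard
        = {w | G.Adj u5 w}.ncard := part_count (fun w => G.Adj u5 w) c hc.1
    have hN5 : {w | G.Adj u5 w}.ncard = 5 := hd5
    rw [hsat5, hN5] at hp5
    by_cases hQ : c u4 = 4 ∧ {w | G.Adj u4 w ∧ c w = 4}.ncard = 4
    · -- Branch III : recolor u4 -> 3, u5 -> 4, u6 -> 3, u1 -> 4
      obtain ⟨hcq4, hsat4⟩ := hQ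
      have hall4 : ∀ w, G.Adj u4 w → w ≠ u5 → c w = 4 := by
        have hsub : {w | G.Adj u4 w ∧ c w = 4} ⊆ {w | G.Adj u4 w} \ {u5} := by
          rintro w ⟨hw, hcw⟩
          refine ⟨hw, ?_⟩
          simp only [Set.mem_singleton_iff]
          rintro rfl
          omega
        have hmem : u5 ∈ {w | G.Adj u4 w} := a45
        have hdd := Set.ncard_diff_singleton_of_mem hmem
        have hN4 : {w | G.Adj u4 w}.ncard = 5 := hd4
        have heq := Set.eq_of_subset_of_ncard_le hsub
          (by rw [hdd, hN4, hsat4]) (Set.toFinite _)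
        intro w hw hw5
        have hwmem : w ∈ {w | G.Adj u4 w} \ {u5} := ⟨hw, by simp [hw5]⟩
        rw [← heq] at hwmem
        exact hwmem.2
      have k3 : c u3 = 4 := hall4 u3 a34.symm n35
      have hall5 : ∀ w, G.Adj u5 w → w ≠ u4 → w ≠ u6 → c w = 3 := by
        have hsub35 : {w | G.Adj u5 w ∧ c w = 3} ⊆ {w | G.Adj u5 w} := fun w hw => hw.1
        have hdiff : ({w | G.Adj u5 w} \ {w | G.Adj u5 w ∧ c w = 3}).ncard = 2 := by
          rw [Set.ncard_diff hsub35 (Set.toFinite _), hsat5, hN5]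
        have hpair : ({u4, u6} : Set V)
            ⊆ {w | G.Adj u5 w} \ {w | G.Adj u5 w ∧ c w = 3} := by
          rintro x (rfl | rfl)
          · exact ⟨a45.symm, fun hx => by have := hx.2; omega⟩
          · exact ⟨a56, fun hx => by have := hx.2; omega⟩
        have heq := Set.eq_of_subset_of_ncard_le hpair
          (by rw [hdiff, Set.ncard_pair n46]) (Set.toFinite _)
        intro w hw hw4 hw6
        rcases hc.1 w with h3 | h4
        · exact h3
        · exfalso
          have hwmem : w ∈ {w | G.Adj u5 w} \ {w | G.Adj u5 w ∧ c w = 3} :=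
            ⟨hw, fun hx => by have := hx.2; omega⟩
          rw [← heq] at hwmem
          simp only [Set.mem_insert_iff, Set.mem_singleton_iff] at hwmem
          tauto
      set c3 : V → ℕ := fun x => if x = u1 then 4 else if x = u4 then 3
        else if x = u5 then 4 else if x = u6 then 3 else c x with hc3def
      have g1 : c3 u1 = 4 := by simp [hc3def]
      have g4 : c3 u4 = 3 := by simp [hc3def, n14.symm]
      have g5 : c3 u5 = 4 := by simp [hc3def, n15.symm, n45.symm]
      have g6 : c3 u6 = 3 := by simp [hc3def, n16.symm, n46.symm, n56.symm]
      have go : ∀ w, w ≠ u1 → w ≠ u4 → w ≠ u5 → w ≠ u6 → c3 w = c w := by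
        intro w h1 h4' h5' h6'
        simp [hc3def, h1, h4', h5', h6']
      have hval3 : ∀ v, c3 v = 3 ∨ c3 v = 4 := by
        intro v
        by_cases hx1 : v = u1
        · rw [hx1, g1]; right; rfl
        by_cases hx4 : v = u4
        · rw [hx4, g4]; left; rfl
        by_cases hx5 : v = u5
        · rw [hx5, g5]; right; rfl
        by_cases hx6 : v = u6
        · rw [hx6, g6]; left; rfl
        · rw [go v hx1 hx4 hx5 hx6]; exact hc.1 v
      apply hnc
      refine ⟨c3, hval3, fun v => ?_⟩
      by_cases hv1 : v = u1
      · subst hv1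
        rw [g1]
        have hsub : {w | G.Adj v w ∧ c3 w = 4} ⊆ (∅ : Set V) := by
          rintro w ⟨hw, hcw⟩
          rcases hu1nbr w hw with rfl | rfl
          · rw [go w n12.symm n24 n25 n26, hc2] at hcw; omega
          · rw [g6] at hcw; omega
        rw [Set.subset_empty_iff] at hsub
        rw [hsub]; simp
      by_cases hv2 : v = u2
      · subst hv2
        rw [go v n12.symm n24 n25 n26]
        have hsub : {w | G.Adj v w ∧ c3 w = c v}
            ⊆ {w | (G.Adj v w ∧ w ≠ u1) ∧ c w = c v} := by
          rintro w ⟨hw, hcw⟩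
          have hwu1 : w ≠ u1 := by rintro rfl; rw [g1, hc2] at hcw; omega
          have hwu4 : w ≠ u4 := by rintro rfl; exact na24 hw
          have hwu5 : w ≠ u5 := by rintro rfl; exact na25 hw
          have hwu6 : w ≠ u6 := by rintro rfl; exact na26 hw
          rw [go w hwu1 hwu4 hwu5 hwu6] at hcw
          exact ⟨⟨hw, hwu1⟩, hcw⟩
        exact le_trans (sub_ncard hsub) (col_bound_near hc n12.symm)
      by_cases hv3 : v = u3
      · subst hv3
        rw [go v n13.symm n34 n35 n36]
        have hsub : {w | G.Adj v w ∧ c3 w = c v} ⊆ {w | G.Adj v w ∧ c w = c v} := by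
          rintro w ⟨hw, hcw⟩
          have hwu1 : w ≠ u1 := by rintro rfl; exact hna31 hw
          have hwu4 : w ≠ u4 := by rintro rfl; rw [g4, k3] at hcw; omega
          have hwu5 : w ≠ u5 := by rintro rfl; exact na35 hw
          have hwu6 : w ≠ u6 := by rintro rfl; exact na36 hw
          rw [go w hwu1 hwu4 hwu5 hwu6] at hcw
          exact ⟨hw, hcw⟩
        exact le_trans (sub_ncard hsub) (col_bound_far hc n13.symm hna31)
      by_cases hv4 : v = u4
      · subst hv4
        rw [g4]
        have hsub : {w | G.Adj v w ∧ c3 w = 3} ⊆ (∅ : Set V) := by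
          rintro w ⟨hw, hcw⟩
          have hwu5 : w ≠ u5 := by rintro rfl; rw [g5] at hcw; omega
          have hwu1 : w ≠ u1 := by rintro rfl; exact hna41 hw
          have hwu4 : w ≠ v := hw.ne'
          have hwu6 : w ≠ u6 := by rintro rfl; exact na46 hw
          rw [go w hwu1 hwu4 hwu5 hwu6] at hcw
          have := hall4 w hw hwu5
          omega
        rw [Set.subset_empty_iff] at hsub
        rw [hsub]; simp
      by_cases hv5 : v = u5
      · subst hv5
        rw [g5]
        have hsub : {w | G.Adj v w ∧ c3 w = 4} ⊆ (∅ : Set V) := by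
          rintro w ⟨hw, hcw⟩
          have hwu4 : w ≠ u4 := by rintro rfl; rw [g4] at hcw; omega
          have hwu6 : w ≠ u6 := by rintro rfl; rw [g6] at hcw; omega
          have hwu1 : w ≠ u1 := by rintro rfl; exact hna51 hw
          have hwu5 : w ≠ v := hw.ne'
          rw [go w hwu1 hwu4 hwu5 hwu6] at hcw
          have := hall5 w hw hwu4 hwu6
          omega
        rw [Set.subset_empty_iff] at hsub
        rw [hsub]; simp
      by_cases hv6 : v = u6
      · subst hv6
        rw [g6]
        have hsub : {w | G.Adj v w ∧ c3 w = 3}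
            ⊆ {w | (G.Adj v w ∧ w ≠ u1) ∧ c w = 3} := by
          rintro w ⟨hw, hcw⟩
          have hwu1 : w ≠ u1 := by rintro rfl; rw [g1] at hcw; omega
          have hwu5 : w ≠ u5 := by rintro rfl; rw [g5] at hcw; omega
          have hwu4 : w ≠ u4 := by rintro rfl; exact na46 hw.symm
          have hwu6 : w ≠ v := hw.ne'
          rw [go w hwu1 hwu4 hwu5 hwu6] at hcw
          exact ⟨⟨hw, hwu1⟩, hcw⟩
        exact le_trans (sub_ncard hsub) (le_trans hT3 (by omega))
      · by_cases hdv : degN G v ≤ 2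
        · have hb : {w | G.Adj v w ∧ c3 w = c3 v}.ncard ≤ 2 := small_bound hdv _
          rcases hval3 v with h | h <;> omega
        · push_neg at hdv
          have hvnadj1 : ¬ G.Adj v u1 := by
            intro h
            rcases hadj1 v h with h' | h'
            · exact hv2 h'
            · exact hv6 h'
          have hvnadj4 : ¬ G.Adj v u4 := fun h => by
            have := h4str v h.symm hv3 hv5; omega
          have hvnadj5 : ¬ G.Adj v u5 := fun h => by
            have := h5str v h.symm hv4 hv6; omega
          have hvnadj6 : ¬ G.Adj v u6 := fun h => by
            have := h6str' v h.symm hv5; omega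
          rw [go v hv1 hv4 hv5 hv6]
          have hsub : {w | G.Adj v w ∧ c3 w = c v} ⊆ {w | G.Adj v w ∧ c w = c v} := by
            rintro w ⟨hw, hcw⟩
            have hwu1 : w ≠ u1 := by rintro rfl; exact hvnadj1 hw
            have hwu4 : w ≠ u4 := by rintro rfl; exact hvnadj4 hw
            have hwu5 : w ≠ u5 := by rintro rfl; exact hvnadj5 hw
            have hwu6 : w ≠ u6 := by rintro rfl; exact hvnadj6 hw
            rw [go w hwu1 hwu4 hwu5 hwu6] at hcw
            exact ⟨hw, hcw⟩
          exact le_trans (sub_ncard hsub) (col_bound_far hc hv1 hvnadj1)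
    · -- Branch II : recolor u5 -> 4, u6 -> 3, u1 -> 4
      set c2' : V → ℕ := fun x => if x = u1 then 4 else if x = u5 then 4
        else if x = u6 then 3 else c x with hc2def
      have f1 : c2' u1 = 4 := by simp [hc2def]
      have f5 : c2' u5 = 4 := by simp [hc2def, n15.symm]
      have f6 : c2' u6 = 3 := by simp [hc2def, n16.symm, n56.symm]
      have fo : ∀ w, w ≠ u1 → w ≠ u5 → w ≠ u6 → c2' w = c w := by
        intro w h1 h5' h6'
        simp [hc2def, h1, h5', h6']
      have hval2 : ∀ v, c2' v = 3 ∨ c2' v = 4 := by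
        intro v
        by_cases hx1 : v = u1
        · rw [hx1, f1]; right; rfl
        by_cases hx5 : v = u5
        · rw [hx5, f5]; right; rfl
        by_cases hx6 : v = u6
        · rw [hx6, f6]; left; rfl
        · rw [fo v hx1 hx5 hx6]; exact hc.1 v
      apply hnc
      refine ⟨c2', hval2, fun v => ?_⟩
      by_cases hv1 : v = u1
      · subst hv1
        rw [f1]
        have hsub : {w | G.Adj v w ∧ c2' w = 4} ⊆ (∅ : Set V) := by
          rintro w ⟨hw, hcw⟩
          rcases hu1nbr w hw with rfl | rfl
          · rw [fo w n12.symm n25 n26, hc2] at hcw; omega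
          · rw [f6] at hcw; omega
        rw [Set.subset_empty_iff] at hsub
        rw [hsub]; simp
      by_cases hv2 : v = u2
      · subst hv2
        rw [fo v n12.symm n25 n26]
        have hsub : {w | G.Adj v w ∧ c2' w = c v}
            ⊆ {w | (G.Adj v w ∧ w ≠ u1) ∧ c w = c v} := by
          rintro w ⟨hw, hcw⟩
          have hwu1 : w ≠ u1 := by rintro rfl; rw [f1, hc2] at hcw; omega
          have hwu5 : w ≠ u5 := by rintro rfl; exact na25 hw
          have hwu6 : w ≠ u6 := by rintro rfl; exact na26 hw
          rw [fo w hwu1 hwu5 hwu6] at hcw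
          exact ⟨⟨hw, hwu1⟩, hcw⟩
        exact le_trans (sub_ncard hsub) (col_bound_near hc n12.symm)
      by_cases hv3 : v = u3
      · subst hv3
        rw [fo v n13.symm n35 n36]
        have hsub : {w | G.Adj v w ∧ c2' w = c v} ⊆ {w | G.Adj v w ∧ c w = c v} := by
          rintro w ⟨hw, hcw⟩
          have hwu1 : w ≠ u1 := by rintro rfl; exact hna31 hw
          have hwu5 : w ≠ u5 := by rintro rfl; exact na35 hw
          have hwu6 : w ≠ u6 := by rintro rfl; exact na36 hw
          rw [fo w hwu1 hwu5 hwu6] at hcw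
          exact ⟨hw, hcw⟩
        exact le_trans (sub_ncard hsub) (col_bound_far hc n13.symm hna31)
      by_cases hv4 : v = u4
      · subst hv4
        rw [fo v n14.symm n45 n46]
        by_cases hcc4 : c v = 4
        · have hnsat : {w | G.Adj v w ∧ c w = 4}.ncard ≤ 3 := by
            have hb := col_bound_far hc n14.symm hna41
            rw [hcc4] at hb
            have hne : ¬ {w | G.Adj v w ∧ c w = 4}.ncard = 4 := fun h => hQ ⟨hcc4, h⟩
            omega
          have hsub : {w | G.Adj v w ∧ c2' w = c v}
              ⊆ insert u5 {w | G.Adj v w ∧ c w = 4} := by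
            rintro w ⟨hw, hcw⟩
            by_cases hwu5 : w = u5
            · exact Or.inl hwu5
            · have hwu1 : w ≠ u1 := by rintro rfl; exact hna41 hw
              have hwu6 : w ≠ u6 := by rintro rfl; exact na46 hw
              rw [fo w hwu1 hwu5 hwu6, hcc4] at hcw
              exact Or.inr ⟨hw, hcw⟩
          calc {w | G.Adj v w ∧ c2' w = c v}.ncard
              ≤ (insert u5 {w | G.Adj v w ∧ c w = 4}).ncard := sub_ncard hsub
            _ ≤ {w | G.Adj v w ∧ c w = 4}.ncard + 1 := Set.ncard_insert_le _ _
            _ ≤ 4 := by omega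
            _ = c v := hcc4.symm
        · have hcc3 : c v = 3 := by rcases hc.1 v with h | h <;> omega
          have hsub : {w | G.Adj v w ∧ c2' w = c v} ⊆ {w | G.Adj v w ∧ c w = c v} := by
            rintro w ⟨hw, hcw⟩
            have hwu1 : w ≠ u1 := by rintro rfl; exact hna41 hw
            have hwu5 : w ≠ u5 := by rintro rfl; rw [f5, hcc3] at hcw; omega
            have hwu6 : w ≠ u6 := by rintro rfl; exact na46 hw
            rw [fo w hwu1 hwu5 hwu6] at hcw
            exact ⟨hw, hcw⟩
          exact le_trans (sub_ncard hsub) (col_bound_far hc n14.symm hna41)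
      by_cases hv5 : v = u5
      · subst hv5
        rw [f5]
        have hsub : {w | G.Adj v w ∧ c2' w = 4} ⊆ {w | G.Adj v w ∧ c w = 4} := by
          rintro w ⟨hw, hcw⟩
          have hwu1 : w ≠ u1 := by rintro rfl; exact hna51 hw
          have hwu6 : w ≠ u6 := by rintro rfl; rw [f6] at hcw; omega
          have hwu5 : w ≠ v := hw.ne'
          rw [fo w hwu1 hwu5 hwu6] at hcw
          exact ⟨hw, hcw⟩
        exact le_trans (sub_ncard hsub) (by omega)
      by_cases hv6 : v = u6
      · subst hv6
        rw [f6]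
        have hsub : {w | G.Adj v w ∧ c2' w = 3}
            ⊆ {w | (G.Adj v w ∧ w ≠ u1) ∧ c w = 3} := by
          rintro w ⟨hw, hcw⟩
          have hwu1 : w ≠ u1 := by rintro rfl; rw [f1] at hcw; omega
          have hwu5 : w ≠ u5 := by rintro rfl; rw [f5] at hcw; omega
          have hwu6 : w ≠ v := hw.ne'
          rw [fo w hwu1 hwu5 hwu6] at hcw
          exact ⟨⟨hw, hwu1⟩, hcw⟩
        exact le_trans (sub_ncard hsub) (le_trans hT3 (by omega))
      · by_cases hdv : degN G v ≤ 2
        · have hb : {w | G.Adj v w ∧ c2' w = c2' v}.ncard ≤ 2 := small_bound hdv _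
          rcases hval2 v with h | h <;> omega
        · push_neg at hdv
          have hvnadj1 : ¬ G.Adj v u1 := by
            intro h
            rcases hadj1 v h with h' | h'
            · exact hv2 h'
            · exact hv6 h'
          have hvnadj5 : ¬ G.Adj v u5 := fun h => by
            have := h5str v h.symm hv4 hv6; omega
          have hvnadj6 : ¬ G.Adj v u6 := fun h => by
            have := h6str' v h.symm hv5; omega
          rw [fo v hv1 hv5 hv6]
          have hsub : {w | G.Adj v w ∧ c2' w = c v} ⊆ {w | G.Adj v w ∧ c w = c v} := by
            rintro w ⟨hw, hcw⟩
            have hwu1 : w ≠ u1 := by rintro rfl; exact hvnadj1 hw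
            have hwu5 : w ≠ u5 := by rintro rfl; exact hvnadj5 hw
            have hwu6 : w ≠ u6 := by rintro rfl; exact hvnadj6 hw
            rw [fo w hwu1 hwu5 hwu6] at hcw
            exact ⟨hw, hcw⟩
          exact le_trans (sub_ncard hsub) (col_bound_far hc hv1 hvnadj1)
  · -- Branch I : recolor u6 to 3, u1 gets 4
    set c1 : V → ℕ := fun x => if x = u1 then 4 else if x = u6 then 3 else c x with hc1def
    have e1 : c1 u1 = 4 := by simp [hc1def]
    have e6 : c1 u6 = 3 := by simp [hc1def, n16.symm]
    have eo : ∀ w, w ≠ u1 → w ≠ u6 → c1 w = c w := by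
      intro w hw1 hw6
      simp [hc1def, hw1, hw6]
    have hval1 : ∀ v, c1 v = 3 ∨ c1 v = 4 := by
      intro v
      by_cases hv1 : v = u1
      · rw [hv1, e1]; right; rfl
      by_cases hv6 : v = u6
      · rw [hv6, e6]; left; rfl
      · rw [eo v hv1 hv6]; exact hc.1 v
    apply hnc
    refine ⟨c1, hval1, fun v => ?_⟩
    by_cases hv1 : v = u1
    · subst hv1
      rw [e1]
      have hsub : {w | G.Adj v w ∧ c1 w = 4} ⊆ (∅ : Set V) := by
        rintro w ⟨hw, hcw⟩
        rcases hu1nbr w hw with rfl | rfl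
        · rw [eo w n12.symm n26] at hcw
          rw [hc2] at hcw
          omega
        · rw [e6] at hcw
          omega
      rw [Set.subset_empty_iff] at hsub
      rw [hsub]
      simp
    by_cases hv6 : v = u6
    · subst hv6
      rw [e6]
      have hsub : {w | G.Adj v w ∧ c1 w = 3} ⊆ {w | (G.Adj v w ∧ w ≠ u1) ∧ c w = 3} := by
        rintro w ⟨hw, hcw⟩
        have hwu1 : w ≠ u1 := by
          rintro rfl
          rw [e1] at hcw
          omega
        rw [eo w hwu1 hw.ne'] at hcw
        exact ⟨⟨hw, hwu1⟩, hcw⟩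
      exact le_trans (sub_ncard hsub) (le_trans hT3 (by omega))
    by_cases hv2 : v = u2
    · subst hv2
      rw [eo v n12.symm n26]
      have hsub : {w | G.Adj v w ∧ c1 w = c v} ⊆ {w | (G.Adj v w ∧ w ≠ u1) ∧ c w = c v} := by
        rintro w ⟨hw, hcw⟩
        have hwu1 : w ≠ u1 := by
          rintro rfl
          rw [e1, hc2] at hcw
          omega
        have hwu6 : w ≠ u6 := by
          rintro rfl
          exact na26 hw
        rw [eo w hwu1 hwu6] at hcw
        exact ⟨⟨hw, hwu1⟩, hcw⟩
      exact le_trans (sub_ncard hsub) (col_bound_near hc n12.symm)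
    by_cases hv5 : v = u5
    · subst hv5
      rw [eo v n15.symm n56]
      by_cases hc5 : c v = 3
      · have hnsat : {w | G.Adj v w ∧ c w = 3}.ncard ≤ 2 := by
          have hb := col_bound_far hc n15.symm hna51
          rw [hc5] at hb
          have : ¬ {w | G.Adj v w ∧ c w = 3}.ncard = 3 := fun h => hP ⟨hc5, h⟩
          omega
        have hsub : {w | G.Adj v w ∧ c1 w = c v} ⊆ insert u6 {w | G.Adj v w ∧ c w = 3} := by
          rintro w ⟨hw, hcw⟩
          by_cases hwu6 : w = u6
          · exact Or.inl hwu6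
          · have hwu1 : w ≠ u1 := by
              rintro rfl
              exact hna51 hw
            rw [eo w hwu1 hwu6] at hcw
            rw [hc5] at hcw
            exact Or.inr ⟨hw, hcw⟩
        calc {w | G.Adj v w ∧ c1 w = c v}.ncard
            ≤ (insert u6 {w | G.Adj v w ∧ c w = 3}).ncard := sub_ncard hsub
          _ ≤ {w | G.Adj v w ∧ c w = 3}.ncard + 1 := Set.ncard_insert_le _ _
          _ ≤ 3 := by omega
          _ = c v := hc5.symm
      · have hsub : {w | G.Adj v w ∧ c1 w = c v} ⊆ {w | G.Adj v w ∧ c w = c v} := by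
          rintro w ⟨hw, hcw⟩
          have hwu1 : w ≠ u1 := by
            rintro rfl
            exact hna51 hw
          have hc5' : c v = 4 := by rcases hc.1 v with h | h <;> omega
          have hwu6 : w ≠ u6 := by
            rintro rfl
            rw [e6, hc5'] at hcw
            omega
          rw [eo w hwu1 hwu6] at hcw
          exact ⟨hw, hcw⟩
        exact le_trans (sub_ncard hsub) (col_bound_far hc n15.symm hna51)
    by_cases hv3 : v = u3
    · subst hv3
      rw [eo v n13.symm n36]
      have hsub : {w | G.Adj v w ∧ c1 w = c v} ⊆ {w | G.Adj v w ∧ c w = c v} := by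
        rintro w ⟨hw, hcw⟩
        have hwu1 : w ≠ u1 := by rintro rfl; exact hna31 hw
        have hwu6 : w ≠ u6 := by rintro rfl; exact na36 hw
        rw [eo w hwu1 hwu6] at hcw
        exact ⟨hw, hcw⟩
      exact le_trans (sub_ncard hsub) (col_bound_far hc n13.symm hna31)
    by_cases hv4 : v = u4
    · subst hv4
      rw [eo v n14.symm n46]
      have hsub : {w | G.Adj v w ∧ c1 w = c v} ⊆ {w | G.Adj v w ∧ c w = c v} := by
        rintro w ⟨hw, hcw⟩
        have hwu1 : w ≠ u1 := by rintro rfl; exact hna41 hw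
        have hwu6 : w ≠ u6 := by rintro rfl; exact na46 hw
        rw [eo w hwu1 hwu6] at hcw
        exact ⟨hw, hcw⟩
      exact le_trans (sub_ncard hsub) (col_bound_far hc n14.symm hna41)
    -- generic vertex
    · by_cases hdv : degN G v ≤ 2
      · have hb : {w | G.Adj v w ∧ c1 w = c1 v}.ncard ≤ 2 := small_bound hdv _
        rcases hval1 v with h | h <;> omega
      · push_neg at hdv
        have hvnadj1 : ¬ G.Adj v u1 := by
          intro h
          rcases hadj1 v h with h' | h'
          · exact hv2 h'
          · exact hv6 h'
        by_cases hadj6 : G.Adj v u6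
        · rcases h6 with h6s | h6p
          · have hcv4 : c v = 4 := h5s6all h6s v hadj6.symm hv1
            rw [eo v hv1 hv6]
            have hsub : {w | G.Adj v w ∧ c1 w = c v} ⊆ {w | G.Adj v w ∧ c w = c v} := by
              rintro w ⟨hw, hcw⟩
              have hwu1 : w ≠ u1 := by rintro rfl; exact hvnadj1 hw
              have hwu6 : w ≠ u6 := by
                rintro rfl
                rw [e6, hcv4] at hcw
                omega
              rw [eo w hwu1 hwu6] at hcw
              exact ⟨hw, hcw⟩
            exact le_trans (sub_ncard hsub) (col_bound_far hc hv1 hvnadj1)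
          · exfalso
            have := h6str h6p v hadj6.symm hv5
            omega
        · rw [eo v hv1 hv6]
          have hsub : {w | G.Adj v w ∧ c1 w = c v} ⊆ {w | G.Adj v w ∧ c w = c v} := by
            rintro w ⟨hw, hcw⟩
            have hwu1 : w ≠ u1 := by rintro rfl; exact hvnadj1 hw
            have hwu6 : w ≠ u6 := by rintro rfl; exact hadj6 hw
            rw [eo w hwu1 hwu6] at hcw
            exact ⟨hw, hcw⟩
          exact le_trans (sub_ncard hsub) (col_bound_far hc hv1 hvnadj1)

end core

section key
variable {V : Type*} [Fintype V] {G : SimpleGraph V}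

lemma to5s {x a b : V} (h : Is5s G x ∨ Is6p G x) (ha : G.Adj x a) (hb : G.Adj x b)
    (hab : a ≠ b) (hda : 3 ≤ degN G a) (hdb : 3 ≤ degN G b) : Is5s G x := by
  rcases h with h | h
  · exact h
  · exfalso
    have hsub : ({a, b} : Set V) ⊆ {w | G.Adj x w ∧ 3 ≤ degN G w} := by
      rintro y (rfl | rfl)
      · exact ⟨ha, hda⟩
      · exact ⟨hb, hdb⟩
    have hle := sub_ncard hsub
    rw [Set.ncard_pair hab] at hle
    have h2' : (2:ℕ) ≤ tpn G x := hle
    have h1 : tpn G x = 1 := h.2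
    omega

lemma key {u1 u2 u3 u4 u5 u6 : V} (hnc : ¬ Colorable34 G)
    (hdel : ∀ v, Colorable34 (deleteVert G v))
    (hgirth : GirthAtLeast5 G)
    (a12 : G.Adj u1 u2) (a23 : G.Adj u2 u3) (a34 : G.Adj u3 u4)
    (a45 : G.Adj u4 u5) (a56 : G.Adj u5 u6) (a61 : G.Adj u6 u1)
    (n13 : u1 ≠ u3) (n14 : u1 ≠ u4) (n15 : u1 ≠ u5) (n24 : u2 ≠ u4)
    (n25 : u2 ≠ u5) (n26 : u2 ≠ u6) (n35 : u3 ≠ u5) (n36 : u3 ≠ u6) (n46 : u4 ≠ u6)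
    (hdeg1 : degN G u1 = 2)
    (h2 : Is5s G u2 ∨ Is6p G u2) (h3 : Is5s G u3 ∨ Is6p G u3)
    (h4 : Is5s G u4 ∨ Is6p G u4) (h5 : Is5s G u5 ∨ Is6p G u5)
    (h6 : Is5s G u6 ∨ Is6p G u6) : False := by
  classical
  have d2 : 3 ≤ degN G u2 := by rcases h2 with h | h <;> (have := h.1; omega)
  have d3 : 3 ≤ degN G u3 := by rcases h3 with h | h <;> (have := h.1; omega)
  have d4 : 3 ≤ degN G u4 := by rcases h4 with h | h <;> (have := h.1; omega)
  have d5 : 3 ≤ degN G u5 := by rcases h5 with h | h <;> (have := h.1; omega)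
  have d6 : 3 ≤ degN G u6 := by rcases h6 with h | h <;> (have := h.1; omega)
  have h5s3 : Is5s G u3 := to5s h3 a23.symm a34 n24 d2 d4
  have h5s4 : Is5s G u4 := to5s h4 a34.symm a45 n35 d3 d5
  have h5s5 : Is5s G u5 := to5s h5 a45.symm a56 n46 d4 d6
  obtain ⟨c, hc⟩ := hdel u1
  obtain ⟨x3, hx3m, hx3c, hx3s⟩ := blocked hnc hc hdeg1 a12 a61.symm n26 3 (Or.inl rfl)
  obtain ⟨x4, hx4m, hx4c, hx4s⟩ := blocked hnc hc hdeg1 a12 a61.symm n26 4 (Or.inr rfl)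
  rcases hx4m with rfl | rfl
  · rcases hx3m with rfl | rfl
    · omega
    · -- c u2 = 4 saturated, c u6 = 3 : use reflected cycle
      exact core hnc hgirth a61.symm a56.symm a45.symm a34.symm a23.symm a12.symm
        n15 n14 n13 n46.symm n36.symm n26.symm n35.symm n25.symm n24.symm
        hdeg1 d5 h2 h5s3 h5s4 hc hx3c hx4c hx4s
  · rcases hx3m with rfl | rfl
    · exact core hnc hgirth a12 a23 a34 a45 a56 a61
        n13 n14 n15 n24 n25 n26 n35 n36 n46
        hdeg1 d3 h6 h5s5 h5s4 hc hx3c hx4c hx4s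
    · omega

end key

/-- In a minimally non-(3,4)-colorable graph of girth at least 5, if
exactly one vertex of a 6-cycle has degree 2 and none of its vertices is a
5p-vertex, then at most four of its vertices are 5s-vertices or 6p-vertices. -/
theorem stmt_15 {V : Type*} [Fintype V] (G : SimpleGraph V)
    (hG : MinNonColorable34 G) (hgirth : GirthAtLeast5 G)
    (u1 u2 u3 u4 u5 u6 : V)
    (hnd : ([u1, u2, u3, u4, u5, u6] : List V).Nodup)
    (a12 : G.Adj u1 u2) (a23 : G.Adj u2 u3) (a34 : G.Adj u3 u4)
    (a45 : G.Adj u4 u5) (a56 : G.Adj u5 u6) (a61 : G.Adj u6 u1)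
    (h2 : {x ∈ ({u1, u2, u3, u4, u5, u6} : Set V) | degN G x = 2}.ncard = 1)
    (h5p : ∀ x ∈ ({u1, u2, u3, u4, u5, u6} : Set V), ¬ Is5p G x) :
    {x ∈ ({u1, u2, u3, u4, u5, u6} : Set V) | Is5s G x ∨ Is6p G x}.ncard ≤ 4 := by
  classical
  by_contra hS
  push_neg at hS
  have n12 : u1 ≠ u2 := by rintro rfl; simp at hnd
  have n13 : u1 ≠ u3 := by rintro rfl; simp at hnd
  have n14 : u1 ≠ u4 := by rintro rfl; simp at hnd
  have n15 : u1 ≠ u5 := by rintro rfl; simp at hnd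
  have n16 : u1 ≠ u6 := by rintro rfl; simp at hnd
  have n23 : u2 ≠ u3 := by rintro rfl; simp at hnd
  have n24 : u2 ≠ u4 := by rintro rfl; simp at hnd
  have n25 : u2 ≠ u5 := by rintro rfl; simp at hnd
  have n26 : u2 ≠ u6 := by rintro rfl; simp at hnd
  have n34 : u3 ≠ u4 := by rintro rfl; simp at hnd
  have n35 : u3 ≠ u5 := by rintro rfl; simp at hnd
  have n36 : u3 ≠ u6 := by rintro rfl; simp at hnd
  have n45 : u4 ≠ u5 := by rintro rfl; simp at hnd
  have n46 : u4 ≠ u6 := by rintro rfl; simp at hnd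
  have n56 : u5 ≠ u6 := by rintro rfl; simp at hnd
  obtain ⟨x0, hx0⟩ := Set.ncard_eq_one.mp h2
  have hx0mem : x0 ∈ ({u1, u2, u3, u4, u5, u6} : Set V) ∧ degN G x0 = 2 := by
    have hm : x0 ∈ ({x0} : Set V) := rfl
    rw [← hx0] at hm
    exact hm
  have hx0d : degN G x0 = 2 := hx0mem.2
  have hCycCard : ({u1, u2, u3, u4, u5, u6} : Set V).ncard ≤ 6 := by
    calc ({u1, u2, u3, u4, u5, u6} : Set V).ncard
        ≤ ({u2, u3, u4, u5, u6} : Set V).ncard + 1 := Set.ncard_insert_le _ _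
      _ ≤ (({u3, u4, u5, u6} : Set V).ncard + 1) + 1 := by
          have := Set.ncard_insert_le u2 ({u3, u4, u5, u6} : Set V); omega
      _ ≤ ((({u4, u5, u6} : Set V).ncard + 1) + 1) + 1 := by
          have := Set.ncard_insert_le u3 ({u4, u5, u6} : Set V); omega
      _ ≤ (((({u5, u6} : Set V).ncard + 1) + 1) + 1) + 1 := by
          have := Set.ncard_insert_le u4 ({u5, u6} : Set V); omega
      _ ≤ ((((({u6} : Set V).ncard + 1) + 1) + 1) + 1) + 1 := by
          have := Set.ncard_insert_le u5 ({u6} : Set V); omega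
      _ ≤ 6 := by rw [Set.ncard_singleton]
  have hall : ∀ y, y ∈ ({u1, u2, u3, u4, u5, u6} : Set V) → y ≠ x0 →
      Is5s G y ∨ Is6p G y := by
    intro y hy hne
    by_contra hno
    have hsubS : {x ∈ ({u1, u2, u3, u4, u5, u6} : Set V) | Is5s G x ∨ Is6p G x}
        ⊆ ({u1, u2, u3, u4, u5, u6} : Set V) \ {x0, y} := by
      rintro z ⟨hz, hzP⟩
      refine ⟨hz, ?_⟩
      simp only [Set.mem_insert_iff, Set.mem_singleton_iff, not_or]
      constructor
      · rintro rfl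
        rcases hzP with h | h
        · have := h.1; omega
        · have := h.1; omega
      · rintro rfl
        exact hno hzP
    have hpairsub : ({x0, y} : Set V) ⊆ ({u1, u2, u3, u4, u5, u6} : Set V) := by
      rintro z (rfl | rfl)
      · exact hx0mem.1
      · exact hy
    have hd := Set.ncard_diff hpairsub (Set.toFinite _)
    have hp2 : ({x0, y} : Set V).ncard = 2 := Set.ncard_pair hne.symm
    have hle := sub_ncard hsubS
    rw [hd, hp2] at hle
    omega
  have hmem := hx0mem.1
  simp only [Set.mem_insert_iff, Set.mem_singleton_iff] at hmem
  rcases hmem with rfl | rfl | rfl | rfl | rfl | rfl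
  · exact key hG.1 hG.2.1 hgirth a12 a23 a34 a45 a56 a61
      n13 n14 n15 n24 n25 n26 n35 n36 n46
      hx0d (hall u2 (by simp) n12.symm) (hall u3 (by simp) n13.symm) (hall u4 (by simp) n14.symm) (hall u5 (by simp) n15.symm) (hall u6 (by simp) n16.symm)
  · exact key hG.1 hG.2.1 hgirth a23 a34 a45 a56 a61 a12
      n24 n25 n26 n35 n36 n13.symm n46 n14.symm n15.symm
      hx0d (hall u3 (by simp) n23.symm) (hall u4 (by simp) n24.symm) (hall u5 (by simp) n25.symm) (hall u6 (by simp) n26.symm) (hall u1 (by simp) n12)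
  · exact key hG.1 hG.2.1 hgirth a34 a45 a56 a61 a12 a23
      n35 n36 n13.symm n46 n14.symm n24.symm n15.symm n25.symm n26.symm
      hx0d (hall u4 (by simp) n34.symm) (hall u5 (by simp) n35.symm) (hall u6 (by simp) n36.symm) (hall u1 (by simp) n13) (hall u2 (by simp) n23)
  · exact key hG.1 hG.2.1 hgirth a45 a56 a61 a12 a23 a34
      n46 n14.symm n24.symm n15.symm n25.symm n35.symm n26.symm n36.symm n13
      hx0d (hall u5 (by simp) n45.symm) (hall u6 (by simp) n46.symm) (hall u1 (by simp) n14) (hall u2 (by simp) n24) (hall u3 (by simp) n34)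
  · exact key hG.1 hG.2.1 hgirth a56 a61 a12 a23 a34 a45
      n15.symm n25.symm n35.symm n26.symm n36.symm n46.symm n13 n14 n24
      hx0d (hall u6 (by simp) n56.symm) (hall u1 (by simp) n15) (hall u2 (by simp) n25) (hall u3 (by simp) n35) (hall u4 (by simp) n45)
  · exact key hG.1 hG.2.1 hgirth a61 a12 a23 a34 a45 a56
      n26.symm n36.symm n46.symm n13 n14 n15 n24 n25 n35
      hx0d (hall u1 (by simp) n16) (hall u2 (by simp) n26) (hall u3 (by simp) n36) (hall u4 (by simp) n46) (hall u5 (by simp) n56)
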